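/- Let R be a commutative integral domain with 1 which is a ring with many units, such that every nonzero ideal of R has finite index in R, let I ⊴ R be a nonzero ideal, and let ‖·‖ be a non-discrete conjugation-invariant norm on the group E(2,R,I). Then for every ε > 0 there exists a nonzero ideal J ⊴ R with J ⊆ I such that ‖E₁₂(x)‖ ≤ ε for all x ∈ J. (This is the content of the statement that the norm-completion of E₁₂(I) with respect to the restriction of ‖·‖ is a profinite group: the subgroups E₁₂(J) have finite index in E₁₂(I) and form a neighborhood basis of the identity.) -/

import Mathlib

open Matrix

def E12 {R : Type*} [CommRing R] (x : R) : Matrix.SpecialLinearGroup (Fin 2) R :=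
  ⟨!![1, x; 0, 1], by simp [Matrix.det_fin_two_of]⟩

def E21 {R : Type*} [CommRing R] (x : R) : Matrix.SpecialLinearGroup (Fin 2) R :=
  ⟨!![1, 0; x, 1], by simp [Matrix.det_fin_two_of]⟩

def hDiag {R : Type*} [CommRing R] (u : Rˣ) : Matrix.SpecialLinearGroup (Fin 2) R :=
  ⟨!![(u : R), 0; 0, ((u⁻¹ : Rˣ) : R)], by simp [Matrix.det_fin_two_of]⟩

def E2 (R : Type*) [CommRing R] : Subgroup (Matrix.SpecialLinearGroup (Fin 2) R) :=
  Subgroup.closure {M | ∃ x : R, M = E12 x ∨ M = E21 x}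

def E2I (R : Type*) [CommRing R] (I : Ideal R) :
    Subgroup (Matrix.SpecialLinearGroup (Fin 2) R) :=
  Subgroup.closure {M | ∃ g ∈ E2 R, ∃ x ∈ I, M = g * E12 x * g⁻¹}

section StmtAux

variable {R : Type*} [CommRing R]

private lemma coe_E12' (x : R) :
    ((E12 x : Matrix.SpecialLinearGroup (Fin 2) R) : Matrix (Fin 2) (Fin 2) R) = !![1, x; 0, 1] :=
  rfl

private lemma E12_mul' (x y : R) : E12 x * E12 y = E12 (x + y) := by
  apply Subtype.ext
  simp only [Matrix.SpecialLinearGroup.coe_mul, coe_E12']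
  rw [Matrix.mul_fin_two]
  ext i j
  fin_cases i <;> fin_cases j <;> simp <;> ring

private lemma E12_inv' (x : R) : (E12 x)⁻¹ = E12 (-x) := by
  apply Subtype.ext
  simp only [Matrix.SpecialLinearGroup.coe_inv, coe_E12', Matrix.adjugate_fin_two]
  ext i j
  fin_cases i <;> fin_cases j <;> simp

private lemma E12_mem_E2 (x : R) : E12 x ∈ E2 R := Subgroup.subset_closure ⟨x, Or.inl rfl⟩

private lemma E21_mem_E2 (x : R) : E21 x ∈ E2 R := Subgroup.subset_closure ⟨x, Or.inr rfl⟩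

private lemma E12_mem {I : Ideal R} {x : R} (hx : x ∈ I) : E12 x ∈ E2I R I :=
  Subgroup.subset_closure ⟨1, Subgroup.one_mem _, x, hx, by rw [one_mul, inv_one, mul_one]⟩

private lemma E21_mem {I : Ideal R} {x : R} (hx : x ∈ I) : E21 x ∈ E2I R I := by
  apply Subgroup.subset_closure
  refine ⟨E12 1 * E21 (-1) * E12 1,
    mul_mem (mul_mem (E12_mem_E2 1) (E21_mem_E2 (-1))) (E12_mem_E2 1), -x, neg_mem hx, ?_⟩
  rw [eq_mul_inv_iff_mul_eq]
  apply Subtype.ext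
  simp only [Matrix.SpecialLinearGroup.coe_mul]
  show (!![1,0;x,1] : Matrix (Fin 2) (Fin 2) R) * (!![1,(1:R);0,1] * !![1,0;-1,1] * !![1,1;0,1])
      = (!![1,(1:R);0,1] * !![1,0;-1,1] * !![1,1;0,1]) * !![1,-x;0,1]
  simp only [Matrix.mul_fin_two]
  ext i j
  fin_cases i <;> fin_cases j <;> simp <;> ring

private lemma entry_mem (I : Ideal R) {g : Matrix.SpecialLinearGroup (Fin 2) R}
    (hg : g ∈ E2I R I) :
    ((g : Matrix.SpecialLinearGroup (Fin 2) R) : Matrix (Fin 2) (Fin 2) R) 1 0 ∈ I := by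
  have hle : E2I R I ≤ (Matrix.SpecialLinearGroup.map (Ideal.Quotient.mk I)).ker := by
    rw [E2I, Subgroup.closure_le]
    rintro M ⟨t, -, x, hx, rfl⟩
    have hE : Matrix.SpecialLinearGroup.map (Ideal.Quotient.mk I) (E12 x) = 1 := by
      apply Subtype.ext
      show (Ideal.Quotient.mk I).mapMatrix
          ((E12 x : Matrix.SpecialLinearGroup (Fin 2) R) : Matrix (Fin 2) (Fin 2) R) = _
      ext i j
      fin_cases i <;> fin_cases j <;>
        simp [E12, Ideal.Quotient.eq_zero_iff_mem.mpr hx, Matrix.one_apply]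
    simp only [SetLike.mem_coe, MonoidHom.mem_ker, _root_.map_mul, map_inv, hE, mul_one,
      mul_inv_cancel]
  have h1 : Matrix.SpecialLinearGroup.map (Ideal.Quotient.mk I) g = 1 := hle hg
  have h2 : Ideal.Quotient.mk I
      (((g : Matrix.SpecialLinearGroup (Fin 2) R) : Matrix (Fin 2) (Fin 2) R) 1 0) = 0 := by
    have h3 := congrArg (fun M : Matrix.SpecialLinearGroup (Fin 2) (R ⧸ I) =>
      ((M : Matrix.SpecialLinearGroup (Fin 2) (R ⧸ I)) : Matrix (Fin 2) (Fin 2) (R ⧸ I)) 1 0) h1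
    simpa [Matrix.SpecialLinearGroup.map_apply_coe, Matrix.one_apply] using h3
  exact Ideal.Quotient.eq_zero_iff_mem.mp h2

private lemma conj_E12 (S : Matrix.SpecialLinearGroup (Fin 2) R) {α : R}
    (h00 : ((S : Matrix.SpecialLinearGroup (Fin 2) R) : Matrix (Fin 2) (Fin 2) R) 0 0 = α)
    (h10 : ((S : Matrix.SpecialLinearGroup (Fin 2) R) : Matrix (Fin 2) (Fin 2) R) 1 0 = 0)
    (y : R) :
    S * E12 y * S⁻¹ = E12 (α ^ 2 * y) := by
  have hd := S.2
  rw [Matrix.det_fin_two] at hd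
  rw [h00, h10, mul_zero, sub_zero] at hd
  apply Subtype.ext
  simp only [Matrix.SpecialLinearGroup.coe_mul, Matrix.SpecialLinearGroup.coe_inv]
  rw [Matrix.eta_fin_two ((S : Matrix.SpecialLinearGroup (Fin 2) R) : Matrix (Fin 2) (Fin 2) R),
    h00, h10]
  show !![α, _; 0, _] * !![1,y;0,1] * adjugate !![α, _; 0, _] = !![1, α^2*y; 0, 1]
  rw [Matrix.adjugate_fin_two]
  simp only [Matrix.mul_fin_two]
  ext i j
  fin_cases i <;> fin_cases j <;> simp <;>
  first
  | linear_combination hd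
  | linear_combination y * hd
  | ring

private lemma key_B {C U V s β : R} (hUV : U * V = 1) (hs : U - 1 = (C ^ 2) ^ 2 * s) :
    (!![1,0;C^2*s*V*U,1] : Matrix (Fin 2) (Fin 2) R) * !![1,C^2;0,1] * !![1,0;-(C^2*s*V),1]
      * !![1,-(C^2*U);0,1] * !![1, U*β; 0,1] = !![V, β; 0, U] := by
  simp only [Matrix.mul_fin_two]
  ext i j
  fin_cases i <;> fin_cases j <;> simp <;>
  first
  | linear_combination (V) * hs - hUV
  | linear_combination (U*(β - C^2)*V) * hs + ((β - C^2)*(1-U)) * hUV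
  | linear_combination (C^2*s*V*U*V) * hs + (-(C^2*s*V*U) + C^2*s*V) * hUV
  | linear_combination ((-(C^2*U) + U*β)*(C^2*s*V*U)*V - 1) * hs
      + ((-(C^2*U) + U*β)*(-(C^2*s*V*U) + C^2*s*V) + C^4*s) * hUV

private lemma key_entries {A B C D U V s : R}
    (hdet : A * D - B * C = 1) (hUV : U * V = 1) (hs : U - 1 = (C ^ 2) ^ 2 * s) :
    ((!![A,B;C,D] : Matrix (Fin 2) (Fin 2) R) * !![V, -(D*C^3*s*(1+U)*V); 0, U] * !![D,-B;-C,A]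
      * !![U, -(-(D*C^3*s*(1+U)*V)); 0, V]) 0 0 = U ^ 2 ∧
    ((!![A,B;C,D] : Matrix (Fin 2) (Fin 2) R) * !![V, -(D*C^3*s*(1+U)*V); 0, U] * !![D,-B;-C,A]
      * !![U, -(-(D*C^3*s*(1+U)*V)); 0, V]) 1 0 = 0 := by
  constructor <;>
  · simp only [Matrix.mul_fin_two]
    simp
    first
    | linear_combination (-(A*D*(1+U)*V*U)) * hs + (A*D*U^2) * hUV + (U^2) * hdet
    | linear_combination (-(C*D*(1+U)*V*U)) * hs + (C*D*U^2) * hUV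

end StmtAux

/-- Lemma 3.4 (tech_lemma_1), key content: over a domain with many units in
which every nonzero ideal has finite index, a non-discrete conjugation-invariant
norm on `E(2,R,I)` admits, for each `ε > 0`, a nonzero ideal `J ⊆ I` with
`‖E₁₂(x)‖ ≤ ε` for all `x ∈ J` (so the norm-completion of `E₁₂(I)` is
profinite). -/
theorem stmt5 {R : Type*} [CommRing R] [IsDomain R]
    (hMU : ∀ c : R, c ≠ 0 → ∃ u : Rˣ,
      (u : R) - 1 ∈ Ideal.span {c ^ 2} ∧ (u : R) ^ 8 - 1 ≠ 0)
    (hfin : ∀ J : Ideal R, J ≠ ⊥ → Finite (R ⧸ J))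
    (I : Ideal R) (hI : I ≠ ⊥)
    (f : (E2I R I) → ℝ)
    (hf_nonneg : ∀ a, 0 ≤ f a)
    (hf_zero : ∀ a, f a = 0 ↔ a = 1)
    (hf_inv : ∀ a, f a⁻¹ = f a)
    (hf_mul : ∀ a b, f (a * b) ≤ f a + f b)
    (hf_conj : ∀ a b, f (a * b * a⁻¹) = f b)
    (hf_nondisc : ∀ ε : ℝ, 0 < ε → ∃ g : (E2I R I), g ≠ 1 ∧ f g < ε) :
    ∀ ε : ℝ, 0 < ε → ∃ J : Ideal R, J ≠ ⊥ ∧ J ≤ I ∧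
      ∀ x ∈ J, ∀ hx : E12 x ∈ E2I R I, f ⟨E12 x, hx⟩ ≤ ε := by
  classical
  intro ε hε
  rcases finite_or_infinite R with hR | hR
  · -- a finite ring cannot carry a non-discrete norm
    exfalso
    haveI : Finite (Matrix.SpecialLinearGroup (Fin 2) R) := Subtype.finite
    haveI : Finite (E2I R I) := Subtype.finite
    obtain ⟨g₀, hg₀, -⟩ := hf_nondisc 1 one_pos
    have hfin' : (Set.range fun p : {x : (E2I R I) // x ≠ 1} => f p.1).Finite :=
      Set.finite_range _
    have hne : (Set.range fun p : {x : (E2I R I) // x ≠ 1} => f p.1).Nonempty :=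
      ⟨f g₀, ⟨⟨g₀, hg₀⟩, rfl⟩⟩
    obtain ⟨v, hv⟩ := hne
    have hTne : hfin'.toFinset.Nonempty := ⟨v, (Set.Finite.mem_toFinset _).mpr hv⟩
    set m := hfin'.toFinset.min' hTne with hm
    have hmmem : m ∈ hfin'.toFinset := hfin'.toFinset.min'_mem hTne
    rw [Set.Finite.mem_toFinset] at hmmem
    obtain ⟨⟨x₀, hx₀⟩, hfx₀⟩ := hmmem
    have hmpos : 0 < m := by
      rw [← hfx₀]
      rcases (hf_nonneg x₀).lt_or_eq with h | h
      · exact h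
      · exact absurd ((hf_zero x₀).mp h.symm) hx₀
    obtain ⟨g', hg'1, hg'f⟩ := hf_nondisc m hmpos
    have hle : m ≤ f g' := hfin'.toFinset.min'_le _
      ((Set.Finite.mem_toFinset _).mpr ⟨⟨g', hg'1⟩, rfl⟩)
    linarith
  · -- main case: R infinite
    obtain ⟨y₀, hy₀I, hy₀⟩ := (Submodule.ne_bot_iff I).mp hI
    -- a small element of the group, different from ±1
    have hex : ∃ g : (E2I R I), f g < ε / 4 ∧ g ≠ 1 ∧
        ((g : Matrix.SpecialLinearGroup (Fin 2) R) : Matrix (Fin 2) (Fin 2) R)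
          ≠ !![-1, 0; 0, -1] := by
      set NS : Matrix.SpecialLinearGroup (Fin 2) R :=
        ⟨!![-1, 0; 0, -1], by norm_num [Matrix.det_fin_two_of]⟩ with hNS
      by_cases hP : ∃ hm : NS ∈ E2I R I, (⟨NS, hm⟩ : (E2I R I)) ≠ 1
      · obtain ⟨hm, hne1⟩ := hP
        have hpos : 0 < f ⟨NS, hm⟩ := by
          rcases (hf_nonneg ⟨NS, hm⟩).lt_or_eq with h | h
          · exact h
          · exact absurd ((hf_zero _).mp h.symm) hne1
        obtain ⟨g, hg1, hgf⟩ := hf_nondisc (min (ε/4) (f ⟨NS, hm⟩))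
          (lt_min (by linarith) hpos)
        refine ⟨g, lt_of_lt_of_le hgf (min_le_left _ _), hg1, fun hEq => ?_⟩
        have hg' : g = ⟨NS, hm⟩ := Subtype.ext (Subtype.ext hEq)
        rw [hg'] at hgf
        exact absurd hgf (not_lt.mpr (min_le_right _ _))
      · push_neg at hP
        obtain ⟨g, hg1, hgf⟩ := hf_nondisc (ε/4) (by linarith)
        refine ⟨g, hgf, hg1, fun hEq => ?_⟩
        have hgNS : (g : Matrix.SpecialLinearGroup (Fin 2) R) = NS := Subtype.ext hEq
        have hm : NS ∈ E2I R I := hgNS ▸ g.2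
        exact hg1 (Subtype.ext hgNS |>.trans (hP hm))
    obtain ⟨g, hgf, hg1, hgN⟩ := hex
    obtain ⟨gM, hgM⟩ : ∃ M, ((g : Matrix.SpecialLinearGroup (Fin 2) R) :
        Matrix (Fin 2) (Fin 2) R) = M := ⟨_, rfl⟩
    have hdetg : gM 0 0 * gM 1 1 - gM 0 1 * gM 1 0 = 1 := by
      have h := (g : Matrix.SpecialLinearGroup (Fin 2) R).2
      rw [Matrix.det_fin_two, hgM] at h
      exact h
    -- choose z ∈ I so that the conjugate of g by E21 z has nonzero lower-left entry
    have hz : ∃ z ∈ I, gM 1 0 + z * (gM 0 0 - gM 1 1) - z^2 * gM 0 1 ≠ 0 := by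
      by_cases hc : gM 1 0 = 0
      · by_cases hb : gM 0 1 = 0
        · have had : gM 0 0 ≠ gM 1 1 := by
            intro had
            have h1 : (gM 0 0 - 1) * (gM 0 0 + 1) = 0 := by
              rw [hc, hb] at hdetg
              linear_combination (gM 0 0) * had + hdetg
            rcases mul_eq_zero.mp h1 with h | h
            · have ha1 : gM 0 0 = 1 := by linear_combination h
              apply hg1
              apply Subtype.ext
              apply Subtype.ext
              rw [hgM, Matrix.eta_fin_two gM, hc, hb, ← had, ha1]
              show _ = ((1 : Matrix.SpecialLinearGroup (Fin 2) R) : Matrix (Fin 2) (Fin 2) R)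
              rw [Matrix.SpecialLinearGroup.coe_one, Matrix.one_fin_two]
            · have ha1 : gM 0 0 = -1 := by linear_combination h
              apply hgN
              rw [hgM, Matrix.eta_fin_two gM, hc, hb, ← had, ha1]
          refine ⟨y₀, hy₀I, ?_⟩
          have hrw : gM 1 0 + y₀ * (gM 0 0 - gM 1 1) - y₀^2 * gM 0 1
              = y₀ * (gM 0 0 - gM 1 1) := by rw [hc, hb]; ring
          rw [hrw]
          exact mul_ne_zero hy₀ (sub_ne_zero.mpr had)
        · by_contra hno
          push_neg at hno
          obtain ⟨r, hr⟩ := Infinite.exists_notMem_finset ({0, 1} : Finset R)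
          simp only [Finset.mem_insert, Finset.mem_singleton, not_or] at hr
          obtain ⟨hr0, hr1⟩ := hr
          have h1 := hno y₀ hy₀I
          have h2 := hno (r * y₀) (I.mul_mem_left r hy₀I)
          rw [hc] at h1 h2
          have e1 : y₀ * ((gM 0 0 - gM 1 1) - y₀ * gM 0 1) = 0 := by linear_combination h1
          have e2 : (r * y₀) * ((gM 0 0 - gM 1 1) - (r * y₀) * gM 0 1) = 0 := by
            linear_combination h2
          have e1' : gM 0 0 - gM 1 1 = y₀ * gM 0 1 := by
            rcases mul_eq_zero.mp e1 with h | h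
            · exact absurd h hy₀
            · exact sub_eq_zero.mp h
          have e2' : gM 0 0 - gM 1 1 = (r * y₀) * gM 0 1 := by
            rcases mul_eq_zero.mp e2 with h | h
            · exact absurd h (mul_ne_zero hr0 hy₀)
            · exact sub_eq_zero.mp h
          have e3 : (1 - r) * (y₀ * gM 0 1) = 0 := by linear_combination e2' - e1'
          rcases mul_eq_zero.mp e3 with h | h
          · have hre : r = 1 := by linear_combination -h
            exact hr1 hre
          · rcases mul_eq_zero.mp h with h' | h'
            · exact hy₀ h'
            · exact hb h'
      · refine ⟨0, I.zero_mem, ?_⟩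
        have hrw : gM 1 0 + 0 * (gM 0 0 - gM 1 1) - 0^2 * gM 0 1 = gM 1 0 := by ring
        rw [hrw]
        exact hc
    obtain ⟨z, hzI, hzC⟩ := hz
    -- conjugate g
    set Zel : (E2I R I) := ⟨E21 z, E21_mem hzI⟩ with hZel
    set G : (E2I R I) := Zel * g * Zel⁻¹ with hGdef
    have hfG : f G = f g := hf_conj Zel g
    obtain ⟨GM, hGM⟩ : ∃ M, ((G : Matrix.SpecialLinearGroup (Fin 2) R) :
        Matrix (Fin 2) (Fin 2) R) = M := ⟨_, rfl⟩
    have hGMval : GM = !![1,0;z,1] * gM * !![1, 0; -z, 1] := by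
      rw [← hGM, ← hgM]
      have h1 : (G : Matrix.SpecialLinearGroup (Fin 2) R)
          = E21 z * (g : Matrix.SpecialLinearGroup (Fin 2) R) * (E21 z)⁻¹ := rfl
      rw [h1]
      simp only [Matrix.SpecialLinearGroup.coe_mul, Matrix.SpecialLinearGroup.coe_inv]
      rw [show ((E21 z : Matrix.SpecialLinearGroup (Fin 2) R) : Matrix (Fin 2) (Fin 2) R)
        = !![1,0;z,1] from rfl, Matrix.adjugate_fin_two]
      norm_num
    -- entries of GM
    obtain ⟨A, hA⟩ : ∃ A, GM 0 0 = A := ⟨_, rfl⟩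
    obtain ⟨Bv, hBv⟩ : ∃ B, GM 0 1 = B := ⟨_, rfl⟩
    obtain ⟨C, hC⟩ : ∃ C, GM 1 0 = C := ⟨_, rfl⟩
    obtain ⟨D, hD⟩ : ∃ D, GM 1 1 = D := ⟨_, rfl⟩
    have hGMeta : GM = !![A, Bv; C, D] := by
      rw [← hA, ← hBv, ← hC, ← hD]; exact Matrix.eta_fin_two GM
    have hdetG : A * D - Bv * C = 1 := by
      rw [← hA, ← hBv, ← hC, ← hD]
      have h := (G : Matrix.SpecialLinearGroup (Fin 2) R).2
      rw [Matrix.det_fin_two, hGM] at h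
      exact h
    have hCval : C = gM 1 0 + z * (gM 0 0 - gM 1 1) - z^2 * gM 0 1 := by
      rw [← hC, hGMval, Matrix.eta_fin_two gM]
      simp only [Matrix.mul_fin_two]
      simp
      ring
    have hC0 : C ≠ 0 := by rw [hCval]; exact hzC
    have hCI : C ∈ I := by rw [← hC, ← hGM]; exact entry_mem I G.2
    -- the unit from the many-units property
    obtain ⟨u, hu1, hu8⟩ := hMU (C ^ 2) (pow_ne_zero 2 hC0)
    obtain ⟨s, hs⟩ := Ideal.mem_span_singleton.mp hu1
    have hUV : (u : R) * ((u⁻¹ : Rˣ) : R) = 1 := u.mul_inv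
    have hu4 : (u : R) ^ 4 - 1 ≠ 0 := fun h4 =>
      hu8 (by linear_combination ((u:R)^4 + 1) * h4)
    -- notation
    obtain ⟨U, hU⟩ : ∃ U, (u : R) = U := ⟨_, rfl⟩
    obtain ⟨V, hV⟩ : ∃ V, ((u⁻¹ : Rˣ) : R) = V := ⟨_, rfl⟩
    rw [hU, hV] at hUV
    rw [hU] at hs hu4
    -- the auxiliary element B
    have hxxI : C^2*s*V*U ∈ I := by
      refine I.mul_mem_right U (I.mul_mem_right V (I.mul_mem_right s ?_))
      rw [pow_two]; exact I.mul_mem_left C hCI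
    have hpI : C^2 ∈ I := by rw [pow_two]; exact I.mul_mem_left C hCI
    have hyyI : -(C^2*s*V) ∈ I := by
      exact neg_mem (I.mul_mem_right V (I.mul_mem_right s hpI))
    have hqI : -(C^2*U) ∈ I := neg_mem (I.mul_mem_right U hpI)
    have hwI : U * -(D*C^3*s*(1+U)*V) ∈ I := by
      refine I.mul_mem_left U (neg_mem ?_)
      refine I.mul_mem_right V (I.mul_mem_right (1+U) (I.mul_mem_right s ?_))
      have : C^3 ∈ I := by rw [pow_succ]; exact I.mul_mem_left _ hCI
      exact I.mul_mem_left D this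
    set Bel : (E2I R I) :=
      ⟨E21 (C^2*s*V*U), E21_mem hxxI⟩ * ⟨E12 (C^2), E12_mem hpI⟩ *
      ⟨E21 (-(C^2*s*V)), E21_mem hyyI⟩ * ⟨E12 (-(C^2*U)), E12_mem hqI⟩ *
      ⟨E12 (U * -(D*C^3*s*(1+U)*V)), E12_mem hwI⟩ with hBel
    have hBmat : ((Bel : Matrix.SpecialLinearGroup (Fin 2) R) : Matrix (Fin 2) (Fin 2) R)
        = !![V, -(D*C^3*s*(1+U)*V); 0, U] := by
      have h1 : (Bel : Matrix.SpecialLinearGroup (Fin 2) R)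
          = E21 (C^2*s*V*U) * E12 (C^2) * E21 (-(C^2*s*V)) * E12 (-(C^2*U)) *
            E12 (U * -(D*C^3*s*(1+U)*V)) := rfl
      rw [h1]
      simp only [Matrix.SpecialLinearGroup.coe_mul]
      show (!![1,0;C^2*s*V*U,1] : Matrix (Fin 2) (Fin 2) R) * !![1,C^2;0,1] *
          !![1,0;-(C^2*s*V),1] * !![1,-(C^2*U);0,1] * !![1, U * -(D*C^3*s*(1+U)*V); 0,1] = _
      exact key_B hUV hs
    -- the commutator h = [G, Bel] is upper triangular with diagonal U^2, V^2
    set hEl : (E2I R I) := G * Bel * G⁻¹ * Bel⁻¹ with hhEl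
    have hfh : f hEl ≤ 2 * f G := by
      have e : hEl = G * (Bel * G⁻¹ * Bel⁻¹) := by rw [hhEl]; group
      calc f hEl = f (G * (Bel * G⁻¹ * Bel⁻¹)) := by rw [← e]
        _ ≤ f G + f (Bel * G⁻¹ * Bel⁻¹) := hf_mul _ _
        _ = f G + f G⁻¹ := by rw [hf_conj Bel G⁻¹]
        _ = 2 * f G := by rw [hf_inv]; ring
    have hhmat : ((hEl : Matrix.SpecialLinearGroup (Fin 2) R) : Matrix (Fin 2) (Fin 2) R)
        = !![A, Bv; C, D] * !![V, -(D*C^3*s*(1+U)*V); 0, U] * !![D, -Bv; -C, A]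
          * !![U, -(-(D*C^3*s*(1+U)*V)); 0, V] := by
      have h1 : (hEl : Matrix.SpecialLinearGroup (Fin 2) R)
          = (G : Matrix.SpecialLinearGroup (Fin 2) R) *
            (Bel : Matrix.SpecialLinearGroup (Fin 2) R) *
            (G : Matrix.SpecialLinearGroup (Fin 2) R)⁻¹ *
            (Bel : Matrix.SpecialLinearGroup (Fin 2) R)⁻¹ := rfl
      rw [h1]
      simp only [Matrix.SpecialLinearGroup.coe_mul, Matrix.SpecialLinearGroup.coe_inv]
      rw [hGM, hGMeta, hBmat, Matrix.adjugate_fin_two, Matrix.adjugate_fin_two]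
      norm_num
    have h00 : ((hEl : Matrix.SpecialLinearGroup (Fin 2) R) : Matrix (Fin 2) (Fin 2) R) 0 0
        = U ^ 2 := by rw [hhmat]; exact (key_entries hdetG hUV hs).1
    have h10 : ((hEl : Matrix.SpecialLinearGroup (Fin 2) R) : Matrix (Fin 2) (Fin 2) R) 1 0
        = 0 := by rw [hhmat]; exact (key_entries hdetG hUV hs).2
    -- the ideal J
    refine ⟨Ideal.span {U ^ 4 - 1} * I, ?_, Ideal.mul_le_right, ?_⟩
    · intro hbot
      have hmem : (U ^ 4 - 1) * y₀ ∈ Ideal.span {U ^ 4 - 1} * I :=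
        Ideal.mem_span_singleton_mul.mpr ⟨y₀, hy₀I, rfl⟩
      rw [hbot, Ideal.mem_bot] at hmem
      exact mul_ne_zero hu4 hy₀ hmem
    · intro x hxJ hx
      obtain ⟨y, hyI, hyx⟩ := Ideal.mem_span_singleton_mul.mp hxJ
      set EY : (E2I R I) := ⟨E12 y, E12_mem hyI⟩ with hEY
      set k : (E2I R I) := hEl * EY * hEl⁻¹ * EY⁻¹ with hk
      have hfk : f k ≤ 2 * f hEl := by
        have e : k = hEl * (EY * hEl⁻¹ * EY⁻¹) := by rw [hk]; group
        calc f k = f (hEl * (EY * hEl⁻¹ * EY⁻¹)) := by rw [← e]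
          _ ≤ f hEl + f (EY * hEl⁻¹ * EY⁻¹) := hf_mul _ _
          _ = f hEl + f hEl⁻¹ := by rw [hf_conj EY hEl⁻¹]
          _ = 2 * f hEl := by rw [hf_inv]; ring
      have hkval : (k : Matrix.SpecialLinearGroup (Fin 2) R) = E12 x := by
        have h1 : (k : Matrix.SpecialLinearGroup (Fin 2) R)
            = (hEl : Matrix.SpecialLinearGroup (Fin 2) R) * E12 y *
              (hEl : Matrix.SpecialLinearGroup (Fin 2) R)⁻¹ * (E12 y)⁻¹ := rfl
        rw [h1, conj_E12 (hEl : Matrix.SpecialLinearGroup (Fin 2) R) h00 h10 y,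
          E12_inv', E12_mul']
        congr 1
        linear_combination hyx
      have hkeq : (⟨E12 x, hx⟩ : (E2I R I)) = k := Subtype.ext hkval.symm
      rw [hkeq]
      have : f k ≤ 4 * f g := by
        calc f k ≤ 2 * f hEl := hfk
          _ ≤ 2 * (2 * f G) := by linarith
          _ = 4 * f g := by rw [hfG]; ring
      linarith
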